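/- Let 0 < μ < 1 and define s(c) = ((1−μ)/2)·h((c−μ)/(1−μ)) and t(c) = ((1+μ)/2)·h((c+μ)/(1+μ)) for c ∈ [μ, 1], where h is binary entropy. Then s(c) < t(c) for all c ∈ [μ, 1). -/

import Mathlib

/-- Binary entropy in bits (with `h 0 = h 1 = 0` since `logb 2 0 = 0`). -/
noncomputable def binEnt (p : ℝ) : ℝ := -(p * Real.logb 2 p) - (1 - p) * Real.logb 2 (1 - p)

private lemma key_mul (a x : ℝ) (ha : 0 < a) (hx : 0 ≤ x) :
    x * Real.log (x / a) = x * Real.log x - x * Real.log a := by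
  rcases eq_or_lt_of_le hx with h | h
  · simp [← h]
  · rw [Real.log_div (ne_of_gt h) (ne_of_gt ha)]
    ring

private lemma scaled_ent (a x : ℝ) (ha : 0 < a) (hx : 0 ≤ x) (hxa : x ≤ a) :
    (a / 2) * binEnt (x / a) =
      (a * Real.log a - x * Real.log x - (a - x) * Real.log (a - x)) / (2 * Real.log 2) := by
  have hone : 1 - x / a = (a - x) / a := by field_simp
  have h1 := key_mul a x ha hx
  have h2 := key_mul a (a - x) ha (by linarith)
  have hl2 : Real.log 2 ≠ 0 := ne_of_gt (Real.log_pos (by norm_num))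
  have expand : (a / 2) * binEnt (x / a) =
      (-(x * Real.log (x / a)) - (a - x) * Real.log ((a - x) / a)) / (2 * Real.log 2) := by
    rw [binEnt, Real.logb, Real.logb, hone]
    field_simp
  rw [expand, h1, h2]
  ring

private lemma phi_mono (μ : ℝ) (hμ0 : 0 < μ) (hμ1 : μ < 1) :
    StrictMonoOn (fun a : ℝ => (a + μ) * Real.log (a + μ) - (a - μ) * Real.log (a - μ))
      (Set.Icc μ 1) := by
  apply strictMonoOn_of_deriv_pos (convex_Icc μ 1)
  · apply ContinuousOn.sub
    · exact (Real.continuous_mul_log.comp (continuous_id.add continuous_const)).continuousOn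
    · exact (Real.continuous_mul_log.comp (continuous_id.sub continuous_const)).continuousOn
  · intro x hx
    rw [interior_Icc] at hx
    obtain ⟨hx1, hx2⟩ := hx
    have hxp : (0:ℝ) < x + μ := by linarith
    have hxm : (0:ℝ) < x - μ := by linarith
    have d1 : HasDerivAt (fun a : ℝ => (a + μ) * Real.log (a + μ))
        ((Real.log (x + μ) + 1) * 1) x :=
      by have := (Real.hasDerivAt_mul_log (ne_of_gt hxp)).comp x ((hasDerivAt_id x).add_const μ); exact this
    have d2 : HasDerivAt (fun a : ℝ => (a - μ) * Real.log (a - μ))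
        ((Real.log (x - μ) + 1) * 1) x :=
      by have := (Real.hasDerivAt_mul_log (ne_of_gt hxm)).comp x ((hasDerivAt_id x).sub_const μ); exact this
    have hd : HasDerivAt (fun a : ℝ => (a + μ) * Real.log (a + μ) - (a - μ) * Real.log (a - μ))
        ((Real.log (x + μ) + 1) * 1 - (Real.log (x - μ) + 1) * 1) x := d1.sub d2
    rw [hd.deriv]
    have := Real.log_lt_log hxm (by linarith : x - μ < x + μ)
    linarith

/-- Lemma 2 of the paper: for `μ ≤ c < 1`,
`s(c) = ((1-μ)/2)·h((c-μ)/(1-μ)) < ((1+μ)/2)·h((c+μ)/(1+μ)) = t(c)`. -/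
theorem lemma_s_lt_t (μ : ℝ) (hμ0 : 0 < μ) (hμ1 : μ < 1) :
    ∀ c ∈ Set.Ico μ (1 : ℝ),
      ((1 - μ) / 2) * binEnt ((c - μ) / (1 - μ)) <
        ((1 + μ) / 2) * binEnt ((c + μ) / (1 + μ)) := by
  intro c hc
  obtain ⟨hcμ, hc1⟩ := hc
  have e1 := scaled_ent (1 - μ) (c - μ) (by linarith) (by linarith) (by linarith)
  have e2 := scaled_ent (1 + μ) (c + μ) (by linarith) (by linarith) (by linarith)
  have h1 : (1 : ℝ) - μ - (c - μ) = 1 - c := by ring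
  have h2 : (1 : ℝ) + μ - (c + μ) = 1 - c := by ring
  rw [h1] at e1
  rw [h2] at e2
  rw [e1, e2]
  have hmono := phi_mono μ hμ0 hμ1 (Set.mem_Icc.mpr ⟨hcμ, le_of_lt hc1⟩)
    (Set.mem_Icc.mpr ⟨le_of_lt hμ1, le_refl 1⟩) hc1
  simp only at hmono
  have hl2 : (0:ℝ) < 2 * Real.log 2 := by
    have := Real.log_pos (by norm_num : (1:ℝ) < 2); linarith
  rw [div_lt_div_iff_of_pos_right hl2]
  linarith
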